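/- Let α ∈ (0,1) and let F : [0, 1/α] → ℝ be the anyon filling factor F(f) = (1−αf)^α (1+(1−α)f)^{1−α}. Then F is Hölder continuous with exponent α on [0, 1/α], i.e., there exists C > 0 such that |F(x) − F(y)| ≤ C|x − y|^α for all x, y ∈ [0, 1/α]; however F is not Lipschitz continuous near f = 1/α: the derivative F'(f) tends to −∞ as f → (1/α)⁻. -/

import Mathlib

noncomputable section

open Set Filter Real
open scoped NNReal

/-- Subadditivity of `rpow` for exponents in `[0,1]`, real version. -/
lemma aux_rpow_add_le (a b p : ℝ) (ha : 0 ≤ a) (hb : 0 ≤ b) (hp : 0 ≤ p) (hp1 : p ≤ 1) :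
    (a + b) ^ p ≤ a ^ p + b ^ p := by
  have h := NNReal.rpow_add_le_add_rpow a.toNNReal b.toNNReal hp hp1
  have hcoe : ((a.toNNReal + b.toNNReal : ℝ≥0) : ℝ) = a + b := by
    simp [Real.coe_toNNReal a ha, Real.coe_toNNReal b hb]
  calc (a + b) ^ p = ((a.toNNReal + b.toNNReal : ℝ≥0) : ℝ) ^ p := by rw [hcoe]
    _ = (((a.toNNReal + b.toNNReal) ^ p : ℝ≥0) : ℝ) := by rw [NNReal.coe_rpow]
    _ ≤ ((a.toNNReal ^ p + b.toNNReal ^ p : ℝ≥0) : ℝ) := by exact_mod_cast h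
    _ = a ^ p + b ^ p := by
        push_cast [NNReal.coe_rpow, Real.coe_toNNReal a ha, Real.coe_toNNReal b hb]
        ring

lemma aux_abs_rpow_sub_rpow_le (a b p : ℝ) (ha : 0 ≤ a) (hb : 0 ≤ b)
    (hp : 0 ≤ p) (hp1 : p ≤ 1) : |a ^ p - b ^ p| ≤ |a - b| ^ p := by
  wlog hab : b ≤ a generalizing a b
  · rw [abs_sub_comm, abs_sub_comm a b]
    exact this b a hb ha (le_of_not_ge hab)
  have h1 : a ^ p - b ^ p ≤ (a - b) ^ p := by
    have := aux_rpow_add_le (a - b) b p (by linarith) hb hp hp1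
    have h2 : a - b + b = a := by ring
    rw [h2] at this
    linarith
  have hbp : b ^ p ≤ a ^ p := Real.rpow_le_rpow hb hab hp
  rw [abs_of_nonneg (by linarith), abs_of_nonneg (by linarith)]
  exact h1

/-- The anyon filling factor `F(f) = (1−αf)^α (1+(1−α)f)^{1−α}`. -/
def fillingFactor (α f : ℝ) : ℝ :=
  (1 - α * f) ^ α * (1 + (1 - α) * f) ^ (1 - α)

/-- the anyon filling factor is `α`-Hölder continuous on `[0, 1/α]`,
but not Lipschitz near `f = 1/α`: its derivative tends to `−∞` as `f → (1/α)⁻`. -/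
theorem fillingFactor_holder_not_lipschitz
    (α : ℝ) (hα : α ∈ Set.Ioo (0 : ℝ) 1) :
    (∃ C : ℝ, 0 < C ∧ ∀ x ∈ Set.Icc 0 (1 / α), ∀ y ∈ Set.Icc 0 (1 / α),
      |fillingFactor α x - fillingFactor α y| ≤ C * |x - y| ^ α)
    ∧ Filter.Tendsto (fun f => deriv (fillingFactor α) f)
        (nhdsWithin (1 / α) (Set.Iio (1 / α))) Filter.atBot := by
  obtain ⟨hα0, hα1⟩ := hα
  have hβ0 : (0:ℝ) ≤ 1 - α := by linarith
  have hb0 : (0:ℝ) < 1 / α := by positivity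
  -- notation
  set g : ℝ → ℝ := fun f => (1 - α * f) ^ α with hg
  set h : ℝ → ℝ := fun f => (1 + (1 - α) * f) ^ (1 - α) with hh
  constructor
  · -- Hölder part
    refine ⟨2 * (1 / α) ^ (1 - α), by positivity, ?_⟩
    intro x hx y hy
    obtain ⟨hx0, hx1⟩ := hx
    obtain ⟨hy0, hy1⟩ := hy
    have hux : 0 ≤ 1 - α * x := by
      have : α * x ≤ α * (1 / α) := by nlinarith
      rw [mul_one_div, div_self hα0.ne'] at this; linarith
    have huy : 0 ≤ 1 - α * y := by
      have : α * y ≤ α * (1 / α) := by nlinarith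
      rw [mul_one_div, div_self hα0.ne'] at this; linarith
    have hvx : (1:ℝ) ≤ 1 + (1 - α) * x := by nlinarith
    have hvy : (1:ℝ) ≤ 1 + (1 - α) * y := by nlinarith
    -- bound on g y
    have hgy_le : g y ≤ 1 := Real.rpow_le_one huy (by nlinarith) hα0.le
    have hgy_0 : 0 ≤ g y := Real.rpow_nonneg huy α
    -- bound on h x
    have hhx_le : h x ≤ (1 / α) ^ (1 - α) := by
      apply Real.rpow_le_rpow (by linarith) _ hβ0
      have : (1:ℝ) + (1 - α) * (1 / α) = 1 / α := by field_simp; ring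
      nlinarith [mul_le_mul_of_nonneg_left hx1 hβ0]
    have hhx_0 : 0 ≤ h x := Real.rpow_nonneg (by linarith) _
    -- g is α-Hölder with constant 1
    have hgH : |g x - g y| ≤ |x - y| ^ α := by
      have h1 : |g x - g y| ≤ |(1 - α * x) - (1 - α * y)| ^ α :=
        aux_abs_rpow_sub_rpow_le _ _ α hux huy hα0.le hα1.le
      have h2 : |(1 - α * x) - (1 - α * y)| = α * |x - y| := by
        rw [show (1 - α * x) - (1 - α * y) = α * (y - x) by ring, abs_mul,
          abs_of_pos hα0, abs_sub_comm]
      rw [h2] at h1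
      calc |g x - g y| ≤ (α * |x - y|) ^ α := h1
        _ = α ^ α * |x - y| ^ α := Real.mul_rpow hα0.le (abs_nonneg _)
        _ ≤ 1 * |x - y| ^ α :=
            mul_le_mul_of_nonneg_right (Real.rpow_le_one hα0.le hα1.le hα0.le)
              (Real.rpow_nonneg (abs_nonneg _) _)
        _ = |x - y| ^ α := one_mul _
    -- h is 1-Lipschitz on [0, 1/α]
    have hhL : |h x - h y| ≤ |x - y| := by
      -- prove for ordered pairs via MVT
      have key : ∀ u v : ℝ, 0 ≤ u → u ≤ v → v ≤ 1 / α → |h v - h u| ≤ v - u := by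
        intro u v hu huv hv
        have hder : ∀ z ∈ Icc u v,
            HasDerivWithinAt h ((1 - α) * (1 - α) * (1 + (1 - α) * z) ^ ((1 - α) - 1))
              (Icc u v) z := by
          intro z hz
          have hz1 : (1:ℝ) ≤ 1 + (1 - α) * z := by nlinarith [hz.1]
          have hd : HasDerivAt (fun f : ℝ => 1 + (1 - α) * f) (1 - α) z := by
            simpa using ((hasDerivAt_id z).const_mul (1 - α)).const_add 1
          have := hd.rpow_const (p := 1 - α) (Or.inl (by linarith))
          exact this.hasDerivWithinAt
        have hbound : ∀ z ∈ Ico u v,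
            ‖(1 - α) * (1 - α) * (1 + (1 - α) * z) ^ ((1 - α) - 1)‖ ≤ 1 := by
          intro z hz
          have hz1 : (1:ℝ) ≤ 1 + (1 - α) * z := by nlinarith [hz.1]
          have hpow : (1 + (1 - α) * z) ^ ((1 - α) - 1) ≤ 1 :=
            Real.rpow_le_one_of_one_le_of_nonpos hz1 (by linarith)
          have hpow0 : 0 ≤ (1 + (1 - α) * z) ^ ((1 - α) - 1) :=
            Real.rpow_nonneg (by linarith) _
          rw [Real.norm_eq_abs, abs_of_nonneg (by positivity)]
          nlinarith
        have := norm_image_sub_le_of_norm_deriv_le_segment' hder hbound v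
          (right_mem_Icc.mpr huv)
        simpa [Real.norm_eq_abs] using this
      rcases le_total x y with hxy | hxy
      · rw [abs_sub_comm, abs_sub_comm x y,
          abs_of_nonneg (by linarith : (0:ℝ) ≤ y - x)]
        exact key x y hx0 hxy hy1
      · rw [abs_of_nonneg (by linarith : (0:ℝ) ≤ x - y)]
        exact key y x hy0 hxy hx1
    -- combine
    have hsplit : fillingFactor α x - fillingFactor α y
        = (g x - g y) * h x + g y * (h x - h y) := by
      simp only [fillingFactor, hg, hh]; ring
    have habs : |x - y| ≤ (1 / α) ^ (1 - α) * |x - y| ^ α := by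
      have h1 : |x - y| = |x - y| ^ α * |x - y| ^ (1 - α) := by
        simpa using Real.rpow_add' (abs_nonneg (x - y))
          (show α + (1 - α) ≠ 0 by norm_num)
      have h2 : |x - y| ^ (1 - α) ≤ (1 / α) ^ (1 - α) := by
        apply Real.rpow_le_rpow (abs_nonneg _) _ hβ0
        rw [abs_sub_le_iff]; constructor <;> linarith
      calc |x - y| = |x - y| ^ α * |x - y| ^ (1 - α) := h1
        _ ≤ |x - y| ^ α * (1 / α) ^ (1 - α) :=
            mul_le_mul_of_nonneg_left h2 (Real.rpow_nonneg (abs_nonneg _) _)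
        _ = (1 / α) ^ (1 - α) * |x - y| ^ α := by ring
    calc |fillingFactor α x - fillingFactor α y|
        = |(g x - g y) * h x + g y * (h x - h y)| := by rw [hsplit]
      _ ≤ |(g x - g y) * h x| + |g y * (h x - h y)| := abs_add_le _ _
      _ = |g x - g y| * |h x| + |g y| * |h x - h y| := by rw [abs_mul, abs_mul]
      _ ≤ |x - y| ^ α * (1 / α) ^ (1 - α) + 1 * |x - y| := by
          rw [abs_of_nonneg hhx_0, abs_of_nonneg hgy_0]
          exact add_le_add
            (mul_le_mul hgH hhx_le hhx_0 (Real.rpow_nonneg (abs_nonneg _) _))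
            (mul_le_mul hgy_le hhL (abs_nonneg _) zero_le_one)
      _ ≤ |x - y| ^ α * (1 / α) ^ (1 - α) + (1 / α) ^ (1 - α) * |x - y| ^ α := by
          rw [one_mul]; linarith
      _ = 2 * (1 / α) ^ (1 - α) * |x - y| ^ α := by ring
  · -- derivative blows up
    -- explicit derivative on (0, 1/α)
    have hderiv : ∀ f ∈ Ioo (0:ℝ) (1/α),
        deriv (fillingFactor α) f
          = (-α * α * (1 - α * f) ^ (α - 1)) * (1 + (1 - α) * f) ^ (1 - α)
            + (1 - α * f) ^ α * ((1 - α) * (1 - α) * (1 + (1 - α) * f) ^ ((1 - α) - 1)) := by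
      intro f hf
      have hu : 0 < 1 - α * f := by
        have : α * f < α * (1 / α) := by nlinarith [hf.2]
        rw [mul_one_div, div_self hα0.ne'] at this; linarith
      have hv : (0:ℝ) < 1 + (1 - α) * f := by nlinarith [hf.1]
      have hdu : HasDerivAt (fun f : ℝ => 1 - α * f) (-α) f := by
        simpa using ((hasDerivAt_id f).const_mul α).const_sub 1
      have hdv : HasDerivAt (fun f : ℝ => 1 + (1 - α) * f) (1 - α) f := by
        simpa using ((hasDerivAt_id f).const_mul (1 - α)).const_add 1
      have h1 : HasDerivAt (fun f : ℝ => (1 - α * f) ^ α)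
          (-α * α * (1 - α * f) ^ (α - 1)) f :=
        hdu.rpow_const (Or.inl hu.ne')
      have h2 : HasDerivAt (fun f : ℝ => (1 + (1 - α) * f) ^ (1 - α))
          ((1 - α) * (1 - α) * (1 + (1 - α) * f) ^ ((1 - α) - 1)) f :=
        hdv.rpow_const (Or.inl hv.ne')
      exact (h1.mul h2).deriv
    -- eventual equality near 1/α from the left
    have hmem : Ioo (0:ℝ) (1/α) ∈ nhdsWithin (1/α) (Iio (1/α)) :=
      Ioo_mem_nhdsLT_of_mem ⟨hb0, le_rfl⟩
    have hev : (fun f : ℝ => (-α * α * (1 - α * f) ^ (α - 1)) * (1 + (1 - α) * f) ^ (1 - α)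
            + (1 - α * f) ^ α * ((1 - α) * (1 - α) * (1 + (1 - α) * f) ^ ((1 - α) - 1)))
          =ᶠ[nhdsWithin (1/α) (Iio (1/α))] (fun f => deriv (fillingFactor α) f) :=
      eventually_of_mem hmem fun f hf => (hderiv f hf).symm
    refine Filter.Tendsto.congr' hev ?_
    -- now show the explicit expression tends to atBot
    have hvlim : Tendsto (fun f : ℝ => 1 + (1 - α) * f) (nhdsWithin (1/α) (Iio (1/α)))
        (nhds (1/α)) := by
      have hc : Tendsto (fun f : ℝ => 1 + (1 - α) * f) (nhds (1/α))
          (nhds (1 + (1 - α) * (1/α))) := by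
        exact (continuous_const.add (continuous_const.mul continuous_id)).tendsto _
      have : (1:ℝ) + (1 - α) * (1/α) = 1/α := by field_simp; ring
      rw [this] at hc
      exact hc.mono_left nhdsWithin_le_nhds
    have hulim : Tendsto (fun f : ℝ => 1 - α * f) (nhdsWithin (1/α) (Iio (1/α)))
        (nhdsWithin 0 (Ioi 0)) := by
      apply tendsto_nhdsWithin_of_tendsto_nhds_of_eventually_within
      · have hc : Tendsto (fun f : ℝ => 1 - α * f) (nhds (1/α))
            (nhds (1 - α * (1/α))) :=
          (continuous_const.sub (continuous_const.mul continuous_id)).tendsto _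
        have : (1:ℝ) - α * (1/α) = 0 := by field_simp; ring
        rw [this] at hc
        exact hc.mono_left nhdsWithin_le_nhds
      · filter_upwards [self_mem_nhdsWithin] with f (hf : f < 1/α)
        have : α * f < α * (1 / α) := by nlinarith
        rw [mul_one_div, div_self hα0.ne'] at this
        simp only [mem_Ioi]; linarith
    -- first summand → atBot
    have hterm1 : Tendsto (fun f : ℝ =>
        (-α * α * (1 - α * f) ^ (α - 1)) * (1 + (1 - α) * f) ^ (1 - α))
        (nhdsWithin (1/α) (Iio (1/α))) atBot := by
      have hpow_atTop : Tendsto (fun f : ℝ => (1 - α * f) ^ (α - 1))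
          (nhdsWithin (1/α) (Iio (1/α))) atTop := by
        have hinv : Tendsto (fun x : ℝ => x ^ (1 - α)) (nhdsWithin 0 (Ioi 0))
            (nhdsWithin 0 (Ioi 0)) := by
          apply tendsto_nhdsWithin_of_tendsto_nhds_of_eventually_within
          · have hc : ContinuousAt (fun x : ℝ => x ^ (1 - α)) 0 :=
              Real.continuousAt_rpow_const 0 (1 - α) (Or.inr hβ0)
            have h0 : (0:ℝ) ^ (1 - α) = 0 := Real.zero_rpow (by linarith)
            have := hc.tendsto
            rw [h0] at this
            exact this.mono_left nhdsWithin_le_nhds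
          · filter_upwards [self_mem_nhdsWithin] with x (hx : x ∈ Ioi 0)
            exact Real.rpow_pos_of_pos hx _
        have hattop : Tendsto (fun x : ℝ => (x ^ (1 - α))⁻¹) (nhdsWithin 0 (Ioi 0))
            atTop := hinv.inv_tendsto_nhdsGT_zero
        have heq : Tendsto (fun x : ℝ => x ^ (α - 1)) (nhdsWithin 0 (Ioi 0)) atTop := by
          apply hattop.congr'
          filter_upwards [self_mem_nhdsWithin] with x (hx : x ∈ Ioi 0)
          rw [← Real.rpow_neg (le_of_lt hx)]
          ring_nf
        exact heq.comp hulim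
      have hvpow : Tendsto (fun f : ℝ => (1 + (1 - α) * f) ^ (1 - α))
          (nhdsWithin (1/α) (Iio (1/α))) (nhds ((1/α) ^ (1 - α))) := by
        have hc : ContinuousAt (fun x : ℝ => x ^ (1 - α)) (1/α) :=
          Real.continuousAt_rpow_const _ _ (Or.inl hb0.ne')
        exact hc.tendsto.comp hvlim
      have hmul1 : Tendsto (fun f : ℝ =>
          (1 - α * f) ^ (α - 1) * (1 + (1 - α) * f) ^ (1 - α))
          (nhdsWithin (1/α) (Iio (1/α))) atTop :=
        Filter.Tendsto.atTop_mul_pos (Real.rpow_pos_of_pos hb0 _) hpow_atTop hvpow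
      have hfinal := Filter.Tendsto.neg_mul_atTop (show -α * α < 0 by nlinarith)
        tendsto_const_nhds hmul1
      apply hfinal.congr
      intro f; ring
    -- second summand → finite limit
    have hterm2 : Tendsto (fun f : ℝ =>
        (1 - α * f) ^ α * ((1 - α) * (1 - α) * (1 + (1 - α) * f) ^ ((1 - α) - 1)))
        (nhdsWithin (1/α) (Iio (1/α)))
        (nhds (0 * ((1 - α) * (1 - α) * (1/α) ^ ((1 - α) - 1)))) := by
      have h1 : Tendsto (fun f : ℝ => (1 - α * f) ^ α)
          (nhdsWithin (1/α) (Iio (1/α))) (nhds 0) := by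
        have hc : ContinuousAt (fun x : ℝ => x ^ α) 0 :=
          Real.continuousAt_rpow_const 0 α (Or.inr hα0.le)
        have h0 : (0:ℝ) ^ α = 0 := Real.zero_rpow hα0.ne'
        have := hc.tendsto.comp (hulim.mono_right nhdsWithin_le_nhds)
        rwa [Function.comp_def, h0] at this
      have h2 : Tendsto (fun f : ℝ => (1 - α) * (1 - α) * (1 + (1 - α) * f) ^ ((1 - α) - 1))
          (nhdsWithin (1/α) (Iio (1/α)))
          (nhds ((1 - α) * (1 - α) * (1/α) ^ ((1 - α) - 1))) := by
        have hc : ContinuousAt (fun x : ℝ => x ^ ((1 - α) - 1)) (1/α) :=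
          Real.continuousAt_rpow_const _ _ (Or.inl hb0.ne')
        exact (tendsto_const_nhds.mul (hc.tendsto.comp hvlim))
      exact h1.mul h2
    rw [zero_mul] at hterm2
    exact hterm1.atBot_add hterm2

end
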